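/- Let P = ℂ × ℙ¹ with projection p to the first factor, and let D = {(z, w) : w² = h(z)} ⊂ ℂ × ℂ ⊂ ℂ × ℙ¹ for an entire function h that is not identically zero. Then there exists a holomorphic map F : ℂ × ℂ → (ℂ × ℙ¹) \ D of the form F(z, w) = (z, H(z, w)) such that for every z with h(z) ≠ 0, the map w ↦ H(z, w) is a surjection from ℂ onto ℙ¹ \ {√h(z), −√h(z)}, and for every z with h(z) = 0, the map w ↦ H(z, w) is a Möbius transformation of ℙ¹ restricted to ℂ, with image ℙ¹ \ {0}. -/

import Mathlib

open Complex OnePoint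

open scoped Nat


noncomputable def myA : ℂ → ℂ :=
  FormalMultilinearSeries.ofScalarsSum (fun n => (1:ℂ) / ((2*n)! : ℂ))

noncomputable def myS : ℂ → ℂ :=
  FormalMultilinearSeries.ofScalarsSum (fun n => (1:ℂ) / ((2*n+1)! : ℂ))

lemma radius_top_of_le (c : ℕ → ℂ) (hc : ∀ n, ‖c n‖ ≤ 1 / n !) :
    (FormalMultilinearSeries.ofScalars ℂ c).radius = ⊤ := by
  apply FormalMultilinearSeries.radius_eq_top_of_summable_norm
  intro r
  refine Summable.of_nonneg_of_le (fun n => by positivity) (fun n => ?_)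
    (Real.summable_pow_div_factorial r)
  rw [FormalMultilinearSeries.ofScalars_norm]
  calc ‖c n‖ * (r:ℝ) ^ n ≤ (1 / n !) * (r:ℝ) ^ n := by
        gcongr; exact hc n
    _ = (r:ℝ) ^ n / n ! := by ring

lemma analytic_of_le (c : ℕ → ℂ) (hc : ∀ n, ‖c n‖ ≤ 1 / n !) (u : ℂ) :
    AnalyticAt ℂ (FormalMultilinearSeries.ofScalarsSum c) u := by
  have hr := radius_top_of_le c hc
  have h := (FormalMultilinearSeries.ofScalars ℂ c).hasFPowerSeriesOnBall
    (by rw [hr]; exact ENNReal.zero_lt_top)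
  exact h.analyticAt_of_mem (by rw [hr]; simp [EMetric.mem_ball, edist_ne_top u 0])

lemma c2n_le (n : ℕ) : ‖(1:ℂ) / ((2*n)! : ℂ)‖ ≤ 1 / n ! := by
  rw [norm_div, norm_one, Complex.norm_natCast]
  have h1 : (0:ℝ) < n ! := by positivity
  have h2 : (n ! : ℝ) ≤ ((2*n)! : ℝ) := by
    exact_mod_cast Nat.factorial_le (by omega)
  exact one_div_le_one_div_of_le h1 h2

lemma c2n1_le (n : ℕ) : ‖(1:ℂ) / ((2*n+1)! : ℂ)‖ ≤ 1 / n ! := by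
  rw [norm_div, norm_one, Complex.norm_natCast]
  have h1 : (0:ℝ) < n ! := by positivity
  have h2 : (n ! : ℝ) ≤ ((2*n+1)! : ℝ) := by
    exact_mod_cast Nat.factorial_le (by omega)
  exact one_div_le_one_div_of_le h1 h2

lemma myA_analytic (u : ℂ) : AnalyticAt ℂ myA u := analytic_of_le _ c2n_le u
lemma myS_analytic (u : ℂ) : AnalyticAt ℂ myS u := analytic_of_le _ c2n1_le u

lemma hasSum_cosh' (x : ℂ) :
    HasSum (fun n : ℕ => x ^ (2*n) / ((2*n)! : ℂ)) (Complex.cosh x) := by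
  have h := Complex.hasSum_cos' (-x * Complex.I)
  simp only [neg_mul, mul_assoc, Complex.I_mul_I, mul_neg_one, neg_neg] at h
  rwa [Complex.cos_neg, Complex.cos_mul_I] at h

lemma hasSum_sinh' (x : ℂ) :
    HasSum (fun n : ℕ => x ^ (2*n+1) / ((2*n+1)! : ℂ)) (Complex.sinh x) := by
  have h := (Complex.hasSum_sin' (-x * Complex.I)).mul_right Complex.I
  simp only [neg_mul, mul_assoc, Complex.I_mul_I, mul_neg_one, neg_neg] at h
  rw [Complex.sin_neg, Complex.sin_mul_I] at h
  simp only [div_mul_cancel₀ _ Complex.I_ne_zero, neg_mul, mul_assoc,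
    Complex.I_mul_I, mul_neg_one, neg_neg] at h
  exact h

lemma myA_sq (x : ℂ) : myA (x^2) = Complex.cosh x := by
  have h : HasSum (fun n : ℕ => ((1:ℂ) / ((2*n)! : ℂ)) • (x^2)^n) (Complex.cosh x) := by
    have := hasSum_cosh' x
    simp only [smul_eq_mul, ← pow_mul]
    convert this using 2 with n
    ring
  rw [myA, FormalMultilinearSeries.ofScalars_sum_eq]
  exact h.tsum_eq

lemma myS_sq (x : ℂ) : x * myS (x^2) = Complex.sinh x := by
  rw [myS, FormalMultilinearSeries.ofScalars_sum_eq, ← tsum_mul_left]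
  have h : HasSum (fun n : ℕ => x * (((1:ℂ) / ((2*n+1)! : ℂ)) • (x^2)^n)) (Complex.sinh x) := by
    have := hasSum_sinh' x
    simp only [smul_eq_mul, ← pow_mul]
    convert this using 2 with n
    ring
  exact h.tsum_eq

lemma myA_zero : myA 0 = 1 := by
  rw [myA, FormalMultilinearSeries.ofScalarsSum_zero]
  norm_num

lemma myS_zero : myS 0 = 1 := by
  rw [myS, FormalMultilinearSeries.ofScalarsSum_zero]
  norm_num

lemma key_identity (u : ℂ) : myA u ^ 2 - u * myS u ^ 2 = 1 := by
  rcases eq_or_ne u 0 with rfl | hu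
  · simp [myA_zero]
  · set x := Complex.exp (Complex.log u / 2) with hx
    have hx2 : x ^ 2 = u := by
      rw [hx, sq, ← Complex.exp_add]
      rw [← two_mul, mul_div_cancel₀ _ (two_ne_zero), Complex.exp_log hu]
    have h1 := myA_sq x
    have h2 := myS_sq x
    have : u * myS u ^ 2 = (x * myS (x^2)) ^ 2 := by rw [mul_pow, hx2]
    rw [this, h2, ← hx2, h1, Complex.cosh_sq_sub_sinh_sq]

lemma ccosh_eq (x : ℂ) : Complex.cosh x = (Complex.exp x + Complex.exp (-x)) / 2 := rfl
lemma csinh_eq (x : ℂ) : Complex.sinh x = (Complex.exp x - Complex.exp (-x)) / 2 := rfl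


/-- Theorem 1.2 in normal form over `R = ℂ`: for an entire `h` not identically zero there
is a fiber-preserving holomorphic map `F(z,w) = (z, H z w)` into `(ℂ × ℙ¹) \ D`, where
`D = {(z,w) : w² = h z}`, such that over each `z` with `h z ≠ 0` the fiber map surjects
onto `ℙ¹ \ {√h z, -√h z}`, and over each `z` with `h z = 0` the fiber map is a Möbius
transformation restricted to `ℂ`, with image `ℙ¹ \ {0}`.  Holomorphy of the `ℙ¹`-valued
map is expressed by local representations `f/g` with `f, g` analytic without common zero. -/
theorem dominate_complement_of_double_section_normal_form
    (h : ℂ → ℂ) (hh : Differentiable ℂ h) (hne : h ≠ 0) :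
    ∃ H : ℂ → ℂ → OnePoint ℂ,
      -- `H` is holomorphic as a map to `ℙ¹`: locally `H = f/g` with `f, g` analytic,
      -- having no common zero, and `g = 0` exactly at the poles of `H`
      (∀ p : ℂ × ℂ, ∃ f g : ℂ × ℂ → ℂ,
        AnalyticAt ℂ f p ∧ AnalyticAt ℂ g p ∧ ¬(f p = 0 ∧ g p = 0) ∧
        ∀ᶠ q in nhds p,
          (g q = 0 → H q.1 q.2 = ∞) ∧ (g q ≠ 0 → H q.1 q.2 = ((f q / g q : ℂ) : OnePoint ℂ))) ∧
      -- the image avoids the double section `D = {(z,w) : w² = h z}`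
      (∀ z w : ℂ, ∀ v : ℂ, H z w = (v : OnePoint ℂ) → v ^ 2 ≠ h z) ∧
      -- over `z` with `h z ≠ 0`, the fiber map surjects onto `ℙ¹ \ {±√h z}`
      (∀ z : ℂ, h z ≠ 0 →
        Set.range (H z) = {x : OnePoint ℂ | ∀ v : ℂ, x = (v : OnePoint ℂ) → v ^ 2 ≠ h z}) ∧
      -- over `z` with `h z = 0`, the fiber map is a Möbius transformation with image `ℙ¹ \ {0}`
      (∀ z : ℂ, h z = 0 →
        (∃ a b c d : ℂ, a * d - b * c ≠ 0 ∧
          ∀ w : ℂ, H z w = if c * w + d = 0 then ∞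
            else (((a * w + b) / (c * w + d) : ℂ) : OnePoint ℂ)) ∧
        Set.range (H z) = {x : OnePoint ℂ | x ≠ ((0 : ℂ) : OnePoint ℂ)}) := by
  classical
  set H : ℂ → ℂ → OnePoint ℂ := fun z w =>
    if w * myS (h z * w ^ 2) = 0 then ∞
    else ((myA (h z * w ^ 2) / (w * myS (h z * w ^ 2)) : ℂ) : OnePoint ℂ) with hHdef
  have hHinf : ∀ z w : ℂ, w * myS (h z * w ^ 2) = 0 → H z w = ∞ := by
    intro z w hq
    rw [hHdef]; simp only; rw [if_pos hq]
  have hHcoe : ∀ z w : ℂ, w * myS (h z * w ^ 2) ≠ 0 →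
      H z w = ((myA (h z * w ^ 2) / (w * myS (h z * w ^ 2)) : ℂ) : OnePoint ℂ) := by
    intro z w hq
    rw [hHdef]; simp only; rw [if_neg hq]
  have havoid : ∀ z w v : ℂ, H z w = (v : OnePoint ℂ) → v ^ 2 ≠ h z := by
    intro z w v hv hcon
    by_cases hg0 : w * myS (h z * w ^ 2) = 0
    · rw [hHinf z w hg0] at hv
      exact OnePoint.infty_ne_coe v hv
    · rw [hHcoe z w hg0, OnePoint.coe_eq_coe, div_eq_iff hg0] at hv
      have hk := key_identity (h z * w ^ 2)
      rw [hv, ← hcon] at hk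
      have : (0 : ℂ) = 1 := by linear_combination hk
      exact zero_ne_one this
  refine ⟨H, ?_, havoid, ?_, ?_⟩
  · -- holomorphy
    intro p
    refine ⟨fun q => myA (h q.1 * q.2 ^ 2), fun q => q.2 * myS (h q.1 * q.2 ^ 2), ?_, ?_, ?_, ?_⟩
    · exact (myA_analytic _).comp
        (((hh.analyticAt p.1).comp analyticAt_fst).mul (analyticAt_snd.pow 2))
    · exact analyticAt_snd.mul ((myS_analytic _).comp
        (((hh.analyticAt p.1).comp analyticAt_fst).mul (analyticAt_snd.pow 2)))
    · rintro ⟨hf0, hg0⟩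
      simp only at hf0 hg0
      have hk := key_identity (h p.1 * p.2 ^ 2)
      rcases mul_eq_zero.1 hg0 with hw | hs
      · rw [hw] at hf0
        norm_num [myA_zero] at hf0
      · rw [hf0, hs] at hk
        norm_num at hk
    · exact Filter.Eventually.of_forall fun q => ⟨hHinf q.1 q.2, hHcoe q.1 q.2⟩
  · -- range over h z ≠ 0
    intro z hz
    ext x
    simp only [Set.mem_range, Set.mem_setOf_eq]
    constructor
    · rintro ⟨w, rfl⟩ v hv
      exact havoid z w v hv
    · intro hx
      rcases x with _ | v
      · exact ⟨0, hHinf z 0 (zero_mul _)⟩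
      · have hv2 : v ^ 2 ≠ h z := hx v rfl
        set s : ℂ := Complex.exp (Complex.log (h z) / 2) with hsdef
        have hs0 : s ≠ 0 := Complex.exp_ne_zero _
        have hs2 : s ^ 2 = h z := by
          rw [hsdef, sq, ← Complex.exp_add, ← two_mul,
            mul_div_cancel₀ _ (two_ne_zero), Complex.exp_log hz]
        have hvs : v - s ≠ 0 := fun h0 => hv2 (by linear_combination (v + s) * h0 + hs2)
        have hvps : v + s ≠ 0 := fun h0 => hv2 (by linear_combination (v - s) * h0 + hs2)
        set c : ℂ := (v + s) / (v - s) with hcdef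
        have hc0 : c ≠ 0 := div_ne_zero hvps hvs
        have hc1 : c ≠ 1 := by
          intro h0
          rw [hcdef, div_eq_one_iff_eq hvs] at h0
          exact hs0 (by linear_combination h0 / 2)
        set w : ℂ := Complex.log c / (2 * s) with hwdef
        have hsw : s * w = Complex.log c / 2 := by
          rw [hwdef]
          field_simp
        set E : ℂ := Complex.exp (s * w) with hEdef
        set F : ℂ := Complex.exp (-(s * w)) with hFdef
        have hEF : E * F = 1 := by
          rw [hEdef, hFdef, ← Complex.exp_add, add_neg_cancel, Complex.exp_zero]
        have hE0 : E ≠ 0 := Complex.exp_ne_zero _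
        have hE2 : E ^ 2 = c := by
          rw [hEdef, hsw, sq, ← Complex.exp_add, ← two_mul,
            mul_div_cancel₀ _ (two_ne_zero), Complex.exp_log hc0]
        have hcosh : Complex.cosh (s * w) = (E + F) / 2 := by rw [ccosh_eq, hEdef, hFdef]
        have hsinh : Complex.sinh (s * w) = (E - F) / 2 := by rw [csinh_eq, hEdef, hFdef]
        have hsinh0 : Complex.sinh (s * w) ≠ 0 := by
          rw [hsinh]
          intro h0
          rw [div_eq_zero_iff] at h0
          rcases h0 with h0 | h0
          · apply hc1
            rw [← hE2]
            linear_combination E * h0 + hEF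
          · norm_num at h0
        have hu : h z * w ^ 2 = (s * w) ^ 2 := by rw [← hs2]; ring
        have hgval : w * myS (h z * w ^ 2) = Complex.sinh (s * w) / s := by
          rw [hu, eq_div_iff hs0]
          linear_combination myS_sq (s * w)
        have hg0' : w * myS (h z * w ^ 2) ≠ 0 := by
          rw [hgval]
          exact div_ne_zero hsinh0 hs0
        clear_value s c w E F
        refine ⟨w, ?_⟩
        show H z w = ((v : ℂ) : OnePoint ℂ)
        rw [hHcoe z w hg0', OnePoint.coe_eq_coe, div_eq_iff hg0', hgval, hu, myA_sq,
          hcosh, hsinh]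
        have key2 : s * (E ^ 2 + 1) = v * (E ^ 2 - 1) := by
          rw [hE2, hcdef]
          field_simp
          ring
        field_simp
        linear_combination F * key2 - E * (s - v) * hEF
  · -- h z = 0
    intro z hz
    have Hform : ∀ w : ℂ, H z w = if w = 0 then ∞ else ((1 / w : ℂ) : OnePoint ℂ) := by
      intro w
      have hu0 : h z * w ^ 2 = 0 := by rw [hz, zero_mul]
      by_cases hw : w = 0
      · rw [if_pos hw, hw]
        exact hHinf z 0 (zero_mul _)
      · rw [if_neg hw, hHcoe z w (by rw [hu0, myS_zero, mul_one]; exact hw), hu0,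
          myA_zero, myS_zero, mul_one]
    constructor
    · refine ⟨0, 1, 1, 0, by norm_num, fun w => ?_⟩
      rw [Hform w]
      by_cases hw : w = 0
      · rw [if_pos hw, if_pos (by rw [hw]; ring)]
      · rw [if_neg hw, if_neg (by simpa using hw)]
        norm_num
    · ext x
      simp only [Set.mem_range, Set.mem_setOf_eq]
      constructor
      · rintro ⟨w, rfl⟩
        rw [Hform w]
        by_cases hw : w = 0
        · rw [if_pos hw]
          exact OnePoint.infty_ne_coe 0
        · rw [if_neg hw, ne_eq, OnePoint.coe_eq_coe]
          exact one_div_ne_zero hw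
      · intro hx
        rcases x with _ | v
        · exact ⟨0, by rw [Hform 0, if_pos rfl]; rfl⟩
        · have hv : v ≠ 0 := fun h0 => hx (by rw [h0]; rfl)
          refine ⟨v⁻¹, ?_⟩
          show H z v⁻¹ = ((v : ℂ) : OnePoint ℂ)
          rw [Hform v⁻¹, if_neg (inv_ne_zero hv), one_div, inv_inv]
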